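/- For p_g ∈ (0, 1/8), the exponent 2 - (1-2p_g)³(1-2p_err)² with p_err bounded by the Fitch bound 1/2 - sqrt((1-4p_g)(1-8p_g))/(2(1-2p_g)²) satisfies 2 - (1-2p_g)³(1-2p_err)² ≤ 2 - (1-2p_g)³·(1-4p_g)(1-8p_g)/(1-2p_g)⁴ < 2, i.e., the runtime exponent of the algorithm is strictly less than 2 for all p_g < 1/8. -/
import Mathlib


/-- the runtime exponent 2 - (1-2p_g)³(1-2p_err)² with p_err bounded by the
Fitch bound is at most 2 - (1-2p_g)³(1-4p_g)(1-8p_g)/(1-2p_g)⁴, which is strictly less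
than 2 for all p_g ∈ (0,1/8). -/
theorem runtime_exponent_lt_two
    (p perr : ℝ) (hp0 : 0 < p) (hp : p < 1/8) (hpe0 : 0 ≤ perr)
    (hpe : perr ≤ 1/2 - Real.sqrt ((1-4*p)*(1-8*p))/(2*(1-2*p)^2)) :
    2 - (1-2*p)^3*(1-2*perr)^2 ≤ 2 - (1-2*p)^3*((1-4*p)*(1-8*p)/(1-2*p)^4) ∧
    2 - (1-2*p)^3*((1-4*p)*(1-8*p)/(1-2*p)^4) < 2 := by
  have h2p : (0:ℝ) < 1 - 2*p := by nlinarith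
  have h3 : (0:ℝ) < (1-2*p)^3 := by positivity
  have h4 : (0:ℝ) < (1-2*p)^4 := by positivity
  have hprod : (0:ℝ) < (1-4*p)*(1-8*p) := by nlinarith
  have hs : Real.sqrt ((1-4*p)*(1-8*p)) ^ 2 = (1-4*p)*(1-8*p) :=
    Real.sq_sqrt hprod.le
  have hsnn : 0 ≤ Real.sqrt ((1-4*p)*(1-8*p)) := Real.sqrt_nonneg _
  constructor
  · have h1 : Real.sqrt ((1-4*p)*(1-8*p))/(1-2*p)^2 ≤ 1 - 2*perr := by
      have h2 : (0:ℝ) < 2*(1-2*p)^2 := by positivity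
      have h2sq : (0:ℝ) < (1-2*p)^2 := by positivity
      have h' : Real.sqrt ((1-4*p)*(1-8*p)) ≤ (1/2 - perr) * (2*(1-2*p)^2) := by
        rw [← div_le_iff₀ h2]; linarith
      rw [div_le_iff₀ h2sq]; nlinarith
    have h1nn : 0 ≤ Real.sqrt ((1-4*p)*(1-8*p))/(1-2*p)^2 := by positivity
    have hsq : (Real.sqrt ((1-4*p)*(1-8*p))/(1-2*p)^2)^2 ≤ (1-2*perr)^2 := by
      exact pow_le_pow_left₀ h1nn h1 2
    rw [div_pow, hs] at hsq
    have heq : ((1-2*p)^2)^2 = (1-2*p)^4 := by ring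
    rw [heq] at hsq
    nlinarith [mul_le_mul_of_nonneg_left hsq h3.le]
  · have : 0 < (1-2*p)^3*((1-4*p)*(1-8*p)/(1-2*p)^4) := by positivity
    linarith
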